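/- Let 0 < q < 1 and j ≥ 1, and define D_j(q) = H₁^j(q) − H₀^j(q). Then D_j satisfies the recursion D_j(q) = 1 − h(q̄_j(q)) + (1 − 2q̄_j(q)) · D_{j−1}(q), with initial value D₀(q) = 0. -/

import Mathlib

open Finset

/-- Hamming weight of a binary string `e ∈ {0,1}^n`. -/
def wt {n : ℕ} (e : Fin n → Bool) : ℕ := (Finset.univ.filter fun i => e i = true).card

/-- i.i.d. Bernoulli(q) probability of the binary string `e ∈ {0,1}^n`. -/
noncomputable def Pq (q : ℝ) {n : ℕ} (e : Fin n → Bool) : ℝ :=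
  q ^ wt e * (1 - q) ^ (n - wt e)

/-- `p̄_j(q) = (1 − (1−2q)^{2^j})/2`. -/
noncomputable def pbar (q : ℝ) (j : ℕ) : ℝ := (1 - (1 - 2 * q) ^ (2 ^ j)) / 2

/-- `q̄_j(q) = p̄_{j−1}(q)²/(1 − p̄_j(q))`. -/
noncomputable def qbar (q : ℝ) (j : ℕ) : ℝ := (pbar q (j - 1)) ^ 2 / (1 - pbar q j)

/-- Binary entropy function (base 2), with `h(0) = h(1) = 0`. -/
noncomputable def binEnt (x : ℝ) : ℝ := -(x * Real.logb 2 x) - (1 - x) * Real.logb 2 (1 - x)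

/-- `Π_b^j(q)`: probability that an i.i.d. Bernoulli(q) vector of length `2^j` has parity `b`. -/
noncomputable def Pib (q : ℝ) (j : ℕ) (b : ℕ) : ℝ := if b = 1 then pbar q j else 1 - pbar q j

/-- `H_b^j(q)`: Shannon entropy (base 2) of an i.i.d. Bernoulli(q) vector of length `2^j`
conditioned on its parity being `b`. -/
noncomputable def Hcond (q : ℝ) (j : ℕ) (b : ℕ) : ℝ :=
  -∑ e ∈ Finset.univ.filter (fun e : Fin (2 ^ j) → Bool => wt e % 2 = b),
      (Pq q e / Pib q j b) * Real.logb 2 (Pq q e / Pib q j b)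

lemma wt_le {n : ℕ} (e : Fin n → Bool) : wt e ≤ n := by
  classical
  simpa [wt] using (Finset.card_filter_le Finset.univ (fun i => e i = true))

lemma Pq_pos {q : ℝ} (hq0 : 0 < q) (hq1 : q < 1) {n : ℕ} (e : Fin n → Bool) : 0 < Pq q e :=
  mul_pos (pow_pos hq0 _) (pow_pos (by linarith) _)

noncomputable def splitE (m k : ℕ) : ((Fin m → Bool) × (Fin k → Bool)) ≃ (Fin (m + k) → Bool) :=
  (Equiv.sumArrowEquivProdArrow _ _ _).symm.trans
    (Equiv.arrowCongr finSumFinEquiv (Equiv.refl Bool))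

lemma splitE_apply (m k : ℕ) (e1 : Fin m → Bool) (e2 : Fin k → Bool) (i : Fin (m + k)) :
    splitE m k (e1, e2) i = Sum.elim e1 e2 (finSumFinEquiv.symm i) := rfl

lemma wt_splitE (m k : ℕ) (e1 : Fin m → Bool) (e2 : Fin k → Bool) :
    wt (splitE m k (e1, e2)) = wt e1 + wt e2 := by
  classical
  have h : ∀ {n : ℕ} (e : Fin n → Bool), wt e = ∑ i : Fin n, if e i = true then 1 else 0 := by
    intro n e; exact Finset.card_filter _ _
  rw [h, h, h]
  have := Equiv.sum_comp (finSumFinEquiv (m := m) (n := k)).symm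
      (fun s : Fin m ⊕ Fin k => if Sum.elim e1 e2 s = true then (1:ℕ) else 0)
  show (∑ i : Fin (m+k), if Sum.elim e1 e2 (finSumFinEquiv.symm i) = true then (1:ℕ) else 0) = _
  rw [Fintype.sum_equiv finSumFinEquiv.symm
      (fun i : Fin (m+k) => if Sum.elim e1 e2 (finSumFinEquiv.symm i) = true then (1:ℕ) else 0)
      (fun s : Fin m ⊕ Fin k => if Sum.elim e1 e2 s = true then (1:ℕ) else 0)
      (fun i => rfl), Fintype.sum_sum_type]
  simp only [Sum.elim_inl, Sum.elim_inr]
  rfl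

lemma Pq_splitE (q : ℝ) (m k : ℕ) (e1 : Fin m → Bool) (e2 : Fin k → Bool) :
    Pq q (splitE m k (e1, e2)) = Pq q e1 * Pq q e2 := by
  have h1 := wt_le e1
  have h2 := wt_le e2
  unfold Pq
  rw [wt_splitE, pow_add, show m + k - (wt e1 + wt e2) = (m - wt e1) + (k - wt e2) by omega,
    pow_add]
  ring

noncomputable def Tg (q s : ℝ) (n : ℕ) : ℝ := ∑ e : Fin n → Bool, s ^ wt e * Pq q e

noncomputable def Ug (q s : ℝ) (n : ℕ) : ℝ :=
  ∑ e : Fin n → Bool, s ^ wt e * Pq q e * Real.logb 2 (Pq q e)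

lemma sum_split (m k : ℕ) (f : (Fin (m + k) → Bool) → ℝ) :
    ∑ e : Fin (m + k) → Bool, f e
      = ∑ e1 : Fin m → Bool, ∑ e2 : Fin k → Bool, f (splitE m k (e1, e2)) := by
  rw [← Equiv.sum_comp (splitE m k) f, Fintype.sum_prod_type]

lemma Tg_add (q s : ℝ) (m k : ℕ) : Tg q s (m + k) = Tg q s m * Tg q s k := by
  rw [Tg, Tg, Tg, sum_split, Finset.sum_mul_sum]
  exact Finset.sum_congr rfl fun e1 _ => Finset.sum_congr rfl fun e2 _ => by
    rw [wt_splitE, Pq_splitE, pow_add]; ring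

lemma Ug_add {q : ℝ} (hq0 : 0 < q) (hq1 : q < 1) (s : ℝ) (m k : ℕ) :
    Ug q s (m + k) = Ug q s m * Tg q s k + Tg q s m * Ug q s k := by
  rw [Ug, sum_split]
  have key : ∀ (e1 : Fin m → Bool) (e2 : Fin k → Bool),
      s ^ wt (splitE m k (e1, e2)) * Pq q (splitE m k (e1, e2))
          * Real.logb 2 (Pq q (splitE m k (e1, e2)))
        = (s ^ wt e1 * Pq q e1 * Real.logb 2 (Pq q e1)) * (s ^ wt e2 * Pq q e2)
          + (s ^ wt e1 * Pq q e1) * (s ^ wt e2 * Pq q e2 * Real.logb 2 (Pq q e2)) := by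
    intro e1 e2
    rw [wt_splitE, Pq_splitE, pow_add,
      Real.logb_mul (Pq_pos hq0 hq1 e1).ne' (Pq_pos hq0 hq1 e2).ne']
    ring
  simp_rw [key, Finset.sum_add_distrib, ← Finset.mul_sum, ← Finset.sum_mul]
  rw [Ug, Ug, Tg, Tg]

lemma Tg_zero (q s : ℝ) : Tg q s 0 = 1 := by
  rw [Tg, Fintype.sum_unique]
  simp [wt, Pq]

lemma wt_const_one (b : Bool) : wt (fun _ : Fin 1 => b) = if b then 1 else 0 := by
  cases b <;> simp [wt]

lemma Tg_one (q s : ℝ) : Tg q s 1 = (1 - q) + s * q := by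
  rw [Tg]
  rw [← Equiv.sum_comp (Equiv.funUnique (Fin 1) Bool).symm
    (fun e : Fin 1 → Bool => s ^ wt e * Pq q e), Fintype.sum_bool]
  show s ^ wt (fun _ : Fin 1 => true) * Pq q (fun _ : Fin 1 => true)
      + s ^ wt (fun _ : Fin 1 => false) * Pq q (fun _ : Fin 1 => false) = _
  rw [wt_const_one, wt_const_one]
  simp [Pq, wt_const_one]
  ring

lemma Ug_one {q : ℝ} (s : ℝ) :
    Ug q s 1 = s * (q * Real.logb 2 q) + (1 - q) * Real.logb 2 (1 - q) := by
  rw [Ug]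
  rw [← Equiv.sum_comp (Equiv.funUnique (Fin 1) Bool).symm
    (fun e : Fin 1 → Bool => s ^ wt e * Pq q e * Real.logb 2 (Pq q e)), Fintype.sum_bool]
  show s ^ wt (fun _ : Fin 1 => true) * Pq q (fun _ : Fin 1 => true)
        * Real.logb 2 (Pq q (fun _ : Fin 1 => true))
      + s ^ wt (fun _ : Fin 1 => false) * Pq q (fun _ : Fin 1 => false)
        * Real.logb 2 (Pq q (fun _ : Fin 1 => false)) = _
  rw [wt_const_one, wt_const_one]
  simp [Pq, wt_const_one]
  ring

lemma Tg_one_val (q : ℝ) (n : ℕ) : Tg q 1 n = 1 := by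
  induction n with
  | zero => exact Tg_zero q 1
  | succ n ih => rw [Tg_add, ih, Tg_one]; ring

lemma Tg_neg_one_val (q : ℝ) (n : ℕ) : Tg q (-1) n = (1 - 2 * q) ^ n := by
  induction n with
  | zero => rw [Tg_zero, pow_zero]
  | succ n ih => rw [Tg_add, ih, Tg_one, pow_succ]; ring

lemma sum_parity (n : ℕ) (f : (Fin n → Bool) → ℝ) (b : ℕ) (hb : b = 0 ∨ b = 1) :
    ∑ e ∈ Finset.univ.filter (fun e : Fin n → Bool => wt e % 2 = b), f e
      = (∑ e : Fin n → Bool, f e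
          + (if b = 0 then 1 else -1) * ∑ e : Fin n → Bool, (-1 : ℝ) ^ wt e * f e) / 2 := by
  rw [eq_div_iff (two_ne_zero (α := ℝ)), Finset.mul_sum, ← Finset.sum_add_distrib,
    Finset.sum_filter, Finset.sum_mul]
  refine Finset.sum_congr rfl fun e _ => ?_
  rcases Nat.even_or_odd (wt e) with h | h
  · have h2 : wt e % 2 = 0 := Nat.even_iff.mp h
    rcases hb with rfl | rfl <;> simp [h2, h.neg_one_pow] <;> ring
  · have h2 : wt e % 2 = 1 := Nat.odd_iff.mp h
    rcases hb with rfl | rfl <;> simp [h2, h.neg_one_pow] <;> ring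

lemma Zb_eq (q : ℝ) (n : ℕ) (b : ℕ) (hb : b = 0 ∨ b = 1) :
    ∑ e ∈ Finset.univ.filter (fun e : Fin n → Bool => wt e % 2 = b), Pq q e
      = (Tg q 1 n + (if b = 0 then 1 else -1) * Tg q (-1) n) / 2 := by
  rw [sum_parity n _ b hb, Tg, Tg]
  simp only [one_pow, one_mul]

lemma Ab_eq (q : ℝ) (n : ℕ) (b : ℕ) (hb : b = 0 ∨ b = 1) :
    ∑ e ∈ Finset.univ.filter (fun e : Fin n → Bool => wt e % 2 = b),
        Pq q e * Real.logb 2 (Pq q e)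
      = (Ug q 1 n + (if b = 0 then 1 else -1) * Ug q (-1) n) / 2 := by
  rw [sum_parity n _ b hb, Ug, Ug]
  simp only [one_pow, one_mul, mul_assoc]

lemma Pib_eq_Zb (q : ℝ) (j : ℕ) (b : ℕ) (hb : b = 0 ∨ b = 1) :
    Pib q j b = ∑ e ∈ Finset.univ.filter (fun e : Fin (2 ^ j) → Bool => wt e % 2 = b), Pq q e := by
  rw [Zb_eq q _ b hb, Tg_one_val, Tg_neg_one_val, Pib, pbar]
  rcases hb with rfl | rfl <;> norm_num <;> ring

lemma pbar_mem {q : ℝ} (hq0 : 0 < q) (hq1 : q < 1) (j : ℕ) :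
    0 < pbar q j ∧ pbar q j < 1 := by
  have h : |(1 - 2*q) ^ (2^j)| < 1 := by
    rw [abs_pow]
    apply pow_lt_one₀ (abs_nonneg _) (by rw [abs_lt]; constructor <;> linarith)
    positivity
  rw [abs_lt] at h
  constructor <;> (rw [pbar]; cases h; linarith)

lemma Pib_pos {q : ℝ} (hq0 : 0 < q) (hq1 : q < 1) (j : ℕ) (b : ℕ) : 0 < Pib q j b := by
  obtain ⟨h1, h2⟩ := pbar_mem hq0 hq1 j
  rw [Pib]; split <;> linarith

lemma Hcond_eq {q : ℝ} (hq0 : 0 < q) (hq1 : q < 1) (j : ℕ) (b : ℕ) (hb : b = 0 ∨ b = 1) :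
    Hcond q j b
      = -((Ug q 1 (2^j) + (if b = 0 then 1 else -1) * Ug q (-1) (2^j)) / 2) / Pib q j b
        + Real.logb 2 (Pib q j b) := by
  have hPi := Pib_pos hq0 hq1 j b
  rw [Hcond]
  have key : ∀ e : Fin (2^j) → Bool,
      (Pq q e / Pib q j b) * Real.logb 2 (Pq q e / Pib q j b)
        = (Pq q e * Real.logb 2 (Pq q e)) / Pib q j b
          - (Real.logb 2 (Pib q j b) / Pib q j b) * Pq q e := by
    intro e
    rw [Real.logb_div (Pq_pos hq0 hq1 e).ne' hPi.ne']
    ring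
  simp_rw [key]
  rw [Finset.sum_sub_distrib, ← Finset.sum_div, ← Finset.mul_sum, ← Pib_eq_Zb q j b hb,
    Ab_eq q _ b hb]
  field_simp
  ring

lemma key_algebra (t u1 ud : ℝ) (ht1 : -1 < t) (ht2 : t < 1) :
    (-(u1 - ud*t)/((1-t^2)/2) + Real.logb 2 ((1-t^2)/2))
      - (-(u1 + ud*t)/((1+t^2)/2) + Real.logb 2 ((1+t^2)/2))
    = 1 - binEnt (((1-t)/2)^2/((1+t^2)/2))
      + (1 - 2*(((1-t)/2)^2/((1+t^2)/2))) *
        ((-((u1 - ud)/2)/((1-t)/2) + Real.logb 2 ((1-t)/2))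
          - (-((u1 + ud)/2)/((1+t)/2) + Real.logb 2 ((1+t)/2))) := by
  have h1 : (0:ℝ) < 1 - t := by linarith
  have h2 : (0:ℝ) < 1 + t := by linarith
  have h3 : (0:ℝ) < 1 + t^2 := by positivity
  have lb2 : Real.logb 2 2 = 1 := Real.logb_self_eq_one one_lt_two
  set x := Real.logb 2 (1-t) with hx
  set y := Real.logb 2 (1+t) with hy
  set z := Real.logb 2 (1+t^2) with hz
  have e2 : 1 - ((1-t)/2)^2/((1+t^2)/2) = ((1+t)/2)^2/((1+t^2)/2) := by
    field_simp; ring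
  have hA : Real.logb 2 ((1-t^2)/2) = x + y - 1 := by
    rw [show (1-t^2)/2 = (1-t)*(1+t)/2 by ring,
      Real.logb_div (by positivity) two_ne_zero, Real.logb_mul h1.ne' h2.ne', lb2]
  have hB : Real.logb 2 ((1+t^2)/2) = z - 1 := by
    rw [Real.logb_div h3.ne' two_ne_zero, lb2]
  have hC : Real.logb 2 ((1-t)/2) = x - 1 := by
    rw [Real.logb_div h1.ne' two_ne_zero, lb2]
  have hD : Real.logb 2 ((1+t)/2) = y - 1 := by
    rw [Real.logb_div h2.ne' two_ne_zero, lb2]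
  have hE : Real.logb 2 (((1-t)/2)^2/((1+t^2)/2)) = 2*x - z - 1 := by
    rw [show ((1-t)/2)^2/((1+t^2)/2) = (1-t)^2/(2*(1+t^2)) by field_simp,
      Real.logb_div (by positivity) (by positivity), Real.logb_pow,
      Real.logb_mul two_ne_zero h3.ne', lb2]
    push_cast; ring
  have hF : Real.logb 2 (((1+t)/2)^2/((1+t^2)/2)) = 2*y - z - 1 := by
    rw [show ((1+t)/2)^2/((1+t^2)/2) = (1+t)^2/(2*(1+t^2)) by field_simp,
      Real.logb_div (by positivity) (by positivity), Real.logb_pow,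
      Real.logb_mul two_ne_zero h3.ne', lb2]
    push_cast; ring
  have h4 : (0:ℝ) < 1 - t^2 := by nlinarith
  rw [binEnt, e2, hA, hB, hC, hD, hE, hF]
  field_simp [h1.ne', h2.ne', h3.ne', h4.ne']
  ring

/-- For `0 < q < 1`, the difference `D_j(q) = H₁^j(q) − H₀^j(q)` satisfies the recursion
`D_j(q) = 1 − h(q̄_j(q)) + (1 − 2q̄_j(q))·D_{j−1}(q)` for `j ≥ 1`, with `D₀(q) = 0`. -/
theorem entropy_difference_recursion (q : ℝ) (hq0 : 0 < q) (hq1 : q < 1) :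
    (∀ j : ℕ, 1 ≤ j →
      Hcond q j 1 - Hcond q j 0
        = 1 - binEnt (qbar q j) + (1 - 2 * qbar q j) * (Hcond q (j - 1) 1 - Hcond q (j - 1) 0)) ∧
    Hcond q 0 1 - Hcond q 0 0 = 0 := by
  constructor
  · intro j hj
    obtain ⟨m, rfl⟩ : ∃ m, j = m + 1 := ⟨j - 1, (Nat.succ_pred_eq_of_pos hj).symm⟩
    simp only [Nat.add_sub_cancel]
    set t : ℝ := (1 - 2*q) ^ (2^m) with hT
    set u1 : ℝ := Ug q 1 (2^m) with hU1
    set ud : ℝ := Ug q (-1) (2^m) with hUd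
    obtain ⟨hpm0, hpm1⟩ := pbar_mem hq0 hq1 m
    have hpmt : pbar q m = (1 - t)/2 := rfl
    have ht1 : -1 < t := by rw [hpmt] at hpm1; linarith
    have ht2 : t < 1 := by rw [hpmt] at hpm0; linarith
    have h2m : 2^(m+1) = 2^m + 2^m := by rw [pow_succ]; ring
    have hpb : pbar q (m+1) = (1 - t^2)/2 := by
      rw [pbar, pow_succ, pow_mul]
    have hUg1 : Ug q 1 (2^(m+1)) = 2 * u1 := by
      rw [h2m, Ug_add hq0 hq1, Tg_one_val, hU1]; ring
    have hUgd : Ug q (-1) (2^(m+1)) = 2 * ud * t := by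
      rw [h2m, Ug_add hq0 hq1, Tg_neg_one_val, hUd, hT]; ring
    have hq' : qbar q (m+1) = ((1-t)/2)^2/((1+t^2)/2) := by
      rw [qbar, Nat.add_sub_cancel, hpmt, hpb]
      congr 1
      ring
    have H1 : Hcond q (m+1) 1 = -(u1 - ud*t)/((1-t^2)/2) + Real.logb 2 ((1-t^2)/2) := by
      rw [Hcond_eq hq0 hq1 (m+1) 1 (Or.inr rfl), hUg1, hUgd]
      norm_num [Pib, hpb]
      ring_nf
    have H0 : Hcond q (m+1) 0 = -(u1 + ud*t)/((1+t^2)/2) + Real.logb 2 ((1+t^2)/2) := by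
      rw [Hcond_eq hq0 hq1 (m+1) 0 (Or.inl rfl), hUg1, hUgd]
      norm_num [Pib, hpb]
      rw [show (1:ℝ) - (1 - t^2)/2 = (1+t^2)/2 by ring]
      ring_nf
    have Hm1 : Hcond q m 1 = -((u1 - ud)/2)/((1-t)/2) + Real.logb 2 ((1-t)/2) := by
      rw [Hcond_eq hq0 hq1 m 1 (Or.inr rfl)]
      norm_num [Pib, hpmt]
      try ring_nf
      rw [hU1, hUd]; ring
    have Hm0 : Hcond q m 0 = -((u1 + ud)/2)/((1+t)/2) + Real.logb 2 ((1+t)/2) := by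
      rw [Hcond_eq hq0 hq1 m 0 (Or.inl rfl)]
      norm_num [Pib, hpmt]
      try rw [show (1:ℝ) - (1 - t)/2 = (1+t)/2 by ring]
      try ring_nf
    rw [H1, H0, Hm1, Hm0, hq']
    exact key_algebra t u1 ud ht1 ht2
  · have hpb0 : pbar q 0 = q := by rw [pbar]; norm_num
    have h1 : Hcond q 0 1 = 0 := by
      rw [Hcond_eq hq0 hq1 0 1 (Or.inr rfl)]
      norm_num [Pib, hpb0, pow_zero, Ug_one]
      field_simp
      ring
    have h0 : Hcond q 0 0 = 0 := by
      rw [Hcond_eq hq0 hq1 0 0 (Or.inl rfl)]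
      norm_num [Pib, hpb0, pow_zero, Ug_one]
      have hq1' : (1:ℝ) - q ≠ 0 := by linarith
      field_simp
      ring
    rw [h1, h0, sub_zero]
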